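/- Let s ≥ 1 be an integer and let f : ℝ → ℝ be s-times continuously differentiable. For each 0 ≤ j ≤ s−1, let p_j be an (s,j)-Hermite polynomial and q_j an (s,j)-dual Hermite polynomial, define p_f := Σ_{j=0}^{s−1} (f^{(j)}(1) − f^{(j)}(0)) · (p_j − q_j), and define the periodicized function f̃ : [0,1] → ℝ by f̃(x) = f(2x) + p_f(2x) for 0 ≤ x ≤ 1/2 and f̃(x) = f(2x−1) for 1/2 < x ≤ 1. Then ∫₀¹ f̃(x)² dx ≤ 4 · Σ_{k=0}^{s} ∫₀¹ f^{(k)}(x)² dx. -/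

import Mathlib

/-- A real polynomial `p` is an `(s,j)`-Hermite polynomial if `deg p ≤ 2s-1` and, for
every `0 ≤ k ≤ s-1`, `p⁽ᵏ⁾(0) = δ_{j,k}` and `p⁽ᵏ⁾(1) = 0`. -/
def IsHermitePoly (s j : ℕ) (p : Polynomial ℝ) : Prop :=
  p.natDegree ≤ 2 * s - 1 ∧
    ∀ k < s, (Polynomial.derivative^[k] p).eval 0 = (if j = k then (1 : ℝ) else 0) ∧
      (Polynomial.derivative^[k] p).eval 1 = 0

/-- A real polynomial `q` is an `(s,j)`-dual Hermite polynomial if `deg q ≤ 2s-1` and, for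
every `0 ≤ k ≤ s-1`, `q⁽ᵏ⁾(0) = 0` and `q⁽ᵏ⁾(1) = δ_{j,k}`. -/
def IsDualHermitePoly (s j : ℕ) (q : Polynomial ℝ) : Prop :=
  q.natDegree ≤ 2 * s - 1 ∧
    ∀ k < s, (Polynomial.derivative^[k] q).eval 0 = 0 ∧
      (Polynomial.derivative^[k] q).eval 1 = (if j = k then (1 : ℝ) else 0)



open MeasureTheory Finset Polynomial Nat intervalIntegral

section Aux


lemma iterate_derivative_eq_factorial_smul' (p : Polynomial ℝ) (k : ℕ) :
    derivative^[k] p = k ! • hasseDeriv k p := by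
  rw [← factorial_smul_hasseDeriv]; rfl

lemma deriv_vanish_iff (p : Polynomial ℝ) (a : ℝ) (s : ℕ) :
    (X - C a) ^ s ∣ p ↔ ∀ k < s, (derivative^[k] p).eval a = 0 := by
  have hXcomp : ((X - C a) ^ s).comp (X + C a) = X ^ s := by
    rw [pow_comp]; simp
  have htay : (X - C a) ^ s ∣ p ↔ X ^ s ∣ taylor a p := by
    constructor
    · rintro ⟨q, rfl⟩
      exact ⟨q.comp (X + C a), by rw [taylor_apply, mul_comp, hXcomp]⟩
    · rintro ⟨q, hq⟩
      have h2 := congrArg (taylor (-a)) hq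
      rw [taylor_taylor, neg_add_cancel, taylor_zero'] at h2
      rw [LinearMap.id_apply] at h2
      refine ⟨q.comp (X + C (-a)), ?_⟩
      rw [h2, taylor_apply, mul_comp, pow_comp, X_comp, map_neg, ← sub_eq_add_neg]
  have hev : ∀ k : ℕ, (derivative^[k] p).eval a = (k ! : ℝ) * (hasseDeriv k p).eval a := by
    intro k
    rw [iterate_derivative_eq_factorial_smul', nsmul_eq_mul, eval_mul]
    simp [mul_comm]
  rw [htay, X_pow_dvd_iff]
  constructor
  · intro h k hk
    rw [hev, ← taylor_coeff, h k hk, mul_zero]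
  · intro h d hd
    have h3 := h d hd
    rw [hev d] at h3
    have hfac : (d ! : ℝ) ≠ 0 := by positivity
    rw [taylor_coeff]
    exact (mul_eq_zero.mp h3).resolve_left hfac

open Polynomial Nat Finset

noncomputable def Gp (t m : ℕ) : Polynomial ℝ :=
  ∑ k ∈ range (m + 1), C (((t + k).choose k : ℝ)) * X ^ k

noncomputable def Wp (t m : ℕ) : Polynomial ℝ :=
  ∑ i ∈ range (t + 1), C (((i + m).choose m : ℝ)) * (1 - X) ^ i

lemma tele (t m : ℕ) :
    (1 - X) * Gp (t + 1) m = Gp t m - C (((t + 1 + m).choose m : ℝ)) * X ^ (m + 1) := by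
  induction m with
  | zero => simp [Gp]
  | succ m ih =>
      have hG : ∀ t' : ℕ, Gp t' (m + 1) = Gp t' m + C (((t' + (m+1)).choose (m+1) : ℝ)) * X ^ (m+1) := by
        intro t'; rw [Gp, Gp, sum_range_succ]
      rw [hG, hG, mul_add, ih]
      have pascal : ((t + 1 + (m+1)).choose (m+1) : ℝ)
          = ((t + (m+1)).choose (m+1) : ℝ) + ((t + 1 + m).choose m : ℝ) := by
        have : t + 1 + (m + 1) = (t + m + 1) + 1 := by ring
        rw [this, Nat.choose_succ_succ (t + m + 1) m]
        push_cast
        have e1 : t + m + 1 = t + (m + 1) := by ring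
        have e2 : t + m + 1 = t + 1 + m := by ring
        rw [← e1, ← e2]  -- adjust
        ring
      rw [pascal]
      push_cast [C_add]
      ring
lemma main_id (t m : ℕ) :
    (1 - X) ^ (t + 1) * Gp t m + X ^ (m + 1) * Wp t m = 1 := by
  induction t with
  | zero =>
      have : Gp 0 m = ∑ k ∈ range (m + 1), X ^ k := by
        simp [Gp]
      rw [this]
      have geo := geom_sum_mul (X : Polynomial ℝ) (m + 1)
      have : Wp 0 m = 1 := by simp [Wp]
      rw [this]
      linear_combination -geo
  | succ t ih =>
      have : (1 - X) ^ (t + 1 + 1) * Gp (t + 1) m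
          = (1 - X) ^ (t + 1) * ((1 - X) * Gp (t + 1) m) := by ring
      rw [this, tele t m]
      have hW : Wp (t + 1) m = Wp t m + C (((t + 1 + m).choose m : ℝ)) * (1 - X) ^ (t + 1) := by
        rw [Wp, Wp, sum_range_succ]
      rw [hW]
      linear_combination ih

open Polynomial Nat Finset

noncomputable def Hp (t j : ℕ) : Polynomial ℝ :=
  C (1 / (j ! : ℝ)) * X ^ j * ((1 - X) ^ (t + 1) * Gp t (t - j))

lemma Gp_eval_nonneg (t m : ℕ) {x : ℝ} (hx : 0 ≤ x) : 0 ≤ (Gp t m).eval x := by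
  rw [Gp]
  simp only [eval_finset_sum, eval_mul, eval_pow, eval_C, eval_X]
  exact Finset.sum_nonneg fun k _ => mul_nonneg (by positivity) (by positivity)

lemma Wp_eval_nonneg (t m : ℕ) {x : ℝ} (hx : x ≤ 1) : 0 ≤ (Wp t m).eval x := by
  rw [Wp]
  simp only [eval_finset_sum, eval_mul, eval_pow, eval_C, eval_X, eval_sub, eval_one]
  exact Finset.sum_nonneg fun k _ => mul_nonneg (by positivity) (pow_nonneg (by linarith) _)

lemma Hp_eval_nonneg (t j : ℕ) {x : ℝ} (hx0 : 0 ≤ x) (hx1 : x ≤ 1) :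
    0 ≤ (Hp t j).eval x := by
  rw [Hp]
  simp only [eval_mul, eval_pow, eval_C, eval_X, eval_sub, eval_one]
  have h1 := Gp_eval_nonneg t (t - j) hx0
  have h2 : (0:ℝ) ≤ (1 - x) ^ (t + 1) := pow_nonneg (by linarith) _
  have h3 : (0:ℝ) ≤ 1 / (j ! : ℝ) := by positivity
  have h4 : (0:ℝ) ≤ x ^ j := pow_nonneg hx0 j
  exact mul_nonneg (mul_nonneg h3 h4) (mul_nonneg h2 h1)

lemma Hp_eval_le (t j : ℕ) {x : ℝ} (hx0 : 0 ≤ x) (hx1 : x ≤ 1) :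
    (Hp t j).eval x ≤ x ^ j / j ! := by
  have hmain := congrArg (fun p : Polynomial ℝ => p.eval x) (main_id t (t - j))
  simp only [eval_add, eval_mul, eval_pow, eval_sub, eval_one, eval_X] at hmain
  have h1 : (1 - x) ^ (t + 1) * (Gp t (t - j)).eval x ≤ 1 := by
    nlinarith [mul_nonneg (pow_nonneg hx0 (t - j + 1)) (Wp_eval_nonneg t (t - j) hx1)]
  rw [Hp]
  simp only [eval_mul, eval_pow, eval_C, eval_X, eval_sub, eval_one]
  have hfac : (0:ℝ) < j ! := by positivity
  have hxj : (0:ℝ) ≤ x ^ j := pow_nonneg hx0 j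
  calc 1 / (j ! : ℝ) * x ^ j * ((1 - x) ^ (t + 1) * (Gp t (t - j)).eval x)
      ≤ 1 / (j ! : ℝ) * x ^ j * 1 := by
        apply mul_le_mul_of_nonneg_left h1 (by positivity)
    _ = x ^ j / j ! := by ring

open Polynomial Nat Finset

lemma monomial_deriv_eval (j k : ℕ) :
    (derivative^[k] (C (1 / (j ! : ℝ)) * X ^ j)).eval 0 = if j = k then (1:ℝ) else 0 := by
  rw [iterate_derivative_C_mul, iterate_derivative_X_pow_eq_smul]
  simp only [eval_mul, eval_C, eval_smul, eval_pow, eval_X, smul_eq_mul]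
  rcases lt_trichotomy j k with h | h | h
  · rw [Nat.descFactorial_eq_zero_iff_lt.mpr h]
    simp [Nat.ne_of_lt h]
  · subst h
    simp [Nat.descFactorial_self, Nat.sub_self]
    field_simp
  · rw [zero_pow (by omega : j - k ≠ 0), if_neg (by omega : ¬ j = k)]
    ring

lemma X_pow_dvd_diff (t j : ℕ) (hj : j ≤ t) :
    X ^ (t + 1) ∣ (C (1 / (j ! : ℝ)) * X ^ j - Hp t j) := by
  refine ⟨C (1 / (j ! : ℝ)) * Wp t (t - j), ?_⟩
  have hid := main_id t (t - j)
  have hrem : (1 : Polynomial ℝ) - (1 - X) ^ (t + 1) * Gp t (t - j)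
      = X ^ (t - j + 1) * Wp t (t - j) := by linear_combination -hid
  calc C (1 / (j ! : ℝ)) * X ^ j - Hp t j
      = C (1 / (j ! : ℝ)) * X ^ j * (1 - (1 - X) ^ (t + 1) * Gp t (t - j)) := by
        rw [Hp]; ring
    _ = C (1 / (j ! : ℝ)) * X ^ j * (X ^ (t - j + 1) * Wp t (t - j)) := by rw [hrem]
    _ = X ^ (t + 1) * (C (1 / (j ! : ℝ)) * Wp t (t - j)) := by
        rw [show (X:Polynomial ℝ) ^ (t+1) = X ^ j * X ^ (t - j + 1) by
          rw [← pow_add]; congr 1; omega]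
        ring
lemma one_sub_X_pow_dvd (t j : ℕ) : (X - C (1:ℝ)) ^ (t + 1) ∣ Hp t j := by
  refine ⟨(-1 : Polynomial ℝ) ^ (t+1) * (C (1 / (j ! : ℝ)) * X ^ j * Gp t (t - j)), ?_⟩
  have h1 : (1 - X : Polynomial ℝ) = -(X - C 1) := by simp
  rw [Hp, h1, neg_pow]
  ring

lemma Hp_natDegree (t j : ℕ) (hj : j ≤ t) : (Hp t j).natDegree ≤ 2 * (t + 1) - 1 := by
  rw [Hp]
  have h1 : (Gp t (t - j)).natDegree ≤ t - j := by
    apply natDegree_sum_le_of_forall_le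
    intro k hk
    apply (natDegree_mul_le).trans
    simp only [natDegree_C, natDegree_pow, natDegree_X]
    simp only [Finset.mem_range] at hk
    omega
  have h2 : ((1 - X : Polynomial ℝ) ^ (t + 1)).natDegree ≤ t + 1 := by
    rw [natDegree_pow]
    have : (1 - X : Polynomial ℝ).natDegree ≤ 1 := (natDegree_sub_le 1 X).trans (by simp)
    calc (t+1) * (1 - X : Polynomial ℝ).natDegree ≤ (t+1) * 1 := Nat.mul_le_mul_left _ this
      _ = t + 1 := by omega
  calc (C (1 / (j ! : ℝ)) * X ^ j * ((1 - X) ^ (t + 1) * Gp t (t - j))).natDegree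
      ≤ (C (1 / (j ! : ℝ)) * X ^ j).natDegree + ((1 - X) ^ (t + 1) * Gp t (t - j)).natDegree :=
        natDegree_mul_le
    _ ≤ (j + ((t + 1) + (t - j))) := by
        have := natDegree_mul_le (p := (C (1 / (j ! : ℝ)))) (q := (X ^ j : Polynomial ℝ))
        have := natDegree_mul_le (p := ((1 - X : Polynomial ℝ) ^ (t + 1))) (q := Gp t (t - j))
        simp only [natDegree_C, natDegree_pow, natDegree_X] at *
        omega
    _ ≤ 2 * (t + 1) - 1 := by omega

lemma Hp_isHermite (t j : ℕ) (hj : j ≤ t) : IsHermitePoly (t + 1) j (Hp t j) := by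
  refine ⟨Hp_natDegree t j hj, fun k hk => ⟨?_, ?_⟩⟩
  · have hdvd := X_pow_dvd_diff t j hj
    have h0 : ((X : Polynomial ℝ) - C 0) ^ (t+1) ∣ (C (1 / (j ! : ℝ)) * X ^ j - Hp t j) := by
      simpa using hdvd
    have hv := (deriv_vanish_iff _ 0 (t+1)).mp h0 k hk
    rw [iterate_derivative_sub, eval_sub, sub_eq_zero] at hv
    rw [← hv, monomial_deriv_eval]
  · exact (deriv_vanish_iff _ 1 (t+1)).mp (one_sub_X_pow_dvd t j) k hk

noncomputable def Qp (t j : ℕ) : Polynomial ℝ := C ((-1:ℝ) ^ j) * (Hp t j).comp (1 - X)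

lemma Qp_isDualHermite (t j : ℕ) (hj : j ≤ t) : IsDualHermitePoly (t + 1) j (Qp t j) := by
  obtain ⟨hdeg, hcond⟩ := Hp_isHermite t j hj
  have hder : ∀ k x0 : ℝ, ∀ k' : ℕ, (derivative^[k'] (Qp t j)).eval x0
      = (-1:ℝ) ^ j * ((-1:ℝ) ^ k' * (derivative^[k'] (Hp t j)).eval (1 - x0)) := by
    intro k x0 k'
    rw [Qp, iterate_derivative_C_mul, iterate_derivative_comp_one_sub_X]
    simp [eval_comp]
  constructor
  · rw [Qp]
    apply natDegree_mul_le.trans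
    have h2 : ((Hp t j).comp (1 - X)).natDegree ≤ (Hp t j).natDegree * 1 := by
      apply natDegree_comp_le.trans
      exact Nat.mul_le_mul_left _ ((natDegree_sub_le 1 X).trans (by simp))
    simp only [natDegree_C]
    omega
  · intro k hk
    obtain ⟨h0, h1⟩ := hcond k hk
    constructor
    · rw [hder 0 0 k]
      simp [h1]
    · rw [hder 0 1 k]
      simp only [sub_self, h0]
      rcases eq_or_ne j k with rfl | hne
      · simp [← pow_add]
      · simp [if_neg hne]

lemma hermite_diff_zero {s : ℕ} (hs : 1 ≤ s) {d : Polynomial ℝ}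
    (hdeg : d.natDegree ≤ 2 * s - 1)
    (h0 : ∀ k < s, (derivative^[k] d).eval 0 = 0)
    (h1 : ∀ k < s, (derivative^[k] d).eval 1 = 0) : d = 0 := by
  have hd0 : (X : Polynomial ℝ) ^ s ∣ d := by
    have := (deriv_vanish_iff d 0 s).mpr h0
    simpa using this
  have hd1 : ((X : Polynomial ℝ) - C 1) ^ s ∣ d := (deriv_vanish_iff d 1 s).mpr h1
  have hcop : IsCoprime ((X : Polynomial ℝ) ^ s) ((X - C 1) ^ s) := by
    apply IsCoprime.pow
    exact ⟨1, -1, by ring_nf; simp⟩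
  have hdvd : (X : Polynomial ℝ) ^ s * (X - C 1) ^ s ∣ d := hcop.mul_dvd hd0 hd1
  by_contra hne
  have hle := natDegree_le_of_dvd hdvd hne
  have hX : ((X : Polynomial ℝ) ^ s) ≠ 0 := pow_ne_zero _ X_ne_zero
  rw [natDegree_mul hX (pow_ne_zero _ (X_sub_C_ne_zero 1)),
    natDegree_pow, natDegree_pow, natDegree_X, natDegree_X_sub_C] at hle
  omega

lemma hermite_eq {s j : ℕ} (hj : j < s) {p : Polynomial ℝ} (h : IsHermitePoly s j p) :
    p = Hp (s - 1) j := by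
  have hs1 : s - 1 + 1 = s := by omega
  have h2 := Hp_isHermite (s - 1) j (by omega)
  rw [hs1] at h2
  obtain ⟨hdeg1, hc1⟩ := h
  obtain ⟨hdeg2, hc2⟩ := h2
  have := hermite_diff_zero (by omega : 1 ≤ s) (d := p - Hp (s-1) j)
    ((natDegree_sub_le _ _).trans (by omega))
    (fun k hk => by rw [iterate_derivative_sub, eval_sub, (hc1 k hk).1, (hc2 k hk).1, sub_self])
    (fun k hk => by rw [iterate_derivative_sub, eval_sub, (hc1 k hk).2, (hc2 k hk).2, sub_self])
  exact sub_eq_zero.mp this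

lemma dual_eq {s j : ℕ} (hj : j < s) {q : Polynomial ℝ} (h : IsDualHermitePoly s j q) :
    q = Qp (s - 1) j := by
  have hs1 : s - 1 + 1 = s := by omega
  have h2 := Qp_isDualHermite (s - 1) j (by omega)
  rw [hs1] at h2
  obtain ⟨hdeg1, hc1⟩ := h
  obtain ⟨hdeg2, hc2⟩ := h2
  have := hermite_diff_zero (by omega : 1 ≤ s) (d := q - Qp (s-1) j)
    ((natDegree_sub_le _ _).trans (by omega))
    (fun k hk => by rw [iterate_derivative_sub, eval_sub, (hc1 k hk).1, (hc2 k hk).1, sub_self])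
    (fun k hk => by rw [iterate_derivative_sub, eval_sub, (hc1 k hk).2, (hc2 k hk).2, sub_self])
  exact sub_eq_zero.mp this

lemma hermite_abs_bound {s j : ℕ} (hj : j < s) {p : Polynomial ℝ} (h : IsHermitePoly s j p)
    {x : ℝ} (hx0 : 0 ≤ x) (hx1 : x ≤ 1) : |p.eval x| ≤ x ^ j / j ! := by
  rw [hermite_eq hj h]
  rw [abs_of_nonneg (Hp_eval_nonneg _ _ hx0 hx1)]
  exact Hp_eval_le _ _ hx0 hx1

lemma dual_abs_bound {s j : ℕ} (hj : j < s) {q : Polynomial ℝ} (h : IsDualHermitePoly s j q)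
    {x : ℝ} (hx0 : 0 ≤ x) (hx1 : x ≤ 1) : |q.eval x| ≤ (1 - x) ^ j / j ! := by
  rw [dual_eq hj h, Qp]
  rw [eval_mul, eval_C, eval_comp]
  simp only [eval_sub, eval_one, eval_X]
  rw [abs_mul, abs_pow, abs_neg, abs_one, one_pow, one_mul]
  rw [abs_of_nonneg (Hp_eval_nonneg _ _ (by linarith) (by linarith))]
  exact Hp_eval_le _ _ (by linarith) (by linarith)

open MeasureTheory Finset intervalIntegral Nat

lemma sq_integral_le {g : ℝ → ℝ} (hg : Continuous g) :
    (∫ x in (0:ℝ)..1, g x) ^ 2 ≤ ∫ x in (0:ℝ)..1, (g x) ^ 2 := by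
  set c := ∫ x in (0:ℝ)..1, g x with hc
  have hint1 : IntervalIntegrable g volume 0 1 := hg.intervalIntegrable _ _
  have hint2 : IntervalIntegrable (fun x => (g x)^2) volume 0 1 :=
    (hg.pow 2).intervalIntegrable _ _
  have hint3 : IntervalIntegrable (fun x => (g x - c)^2) volume 0 1 :=
    ((hg.sub continuous_const).pow 2).intervalIntegrable _ _
  have h0 : 0 ≤ ∫ x in (0:ℝ)..1, (g x - c)^2 :=
    intervalIntegral.integral_nonneg (by norm_num) (fun x _ => sq_nonneg _)
  have hexp : ∫ x in (0:ℝ)..1, (g x - c)^2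
      = (∫ x in (0:ℝ)..1, (g x)^2) - 2 * c * c + c^2 := by
    have : ∀ x, (g x - c)^2 = (g x)^2 - (2*c) * g x + c^2 := fun x => by ring
    simp_rw [this]
    rw [intervalIntegral.integral_add (f := fun x => g x ^ 2 - 2 * c * g x) (g := fun _ => c ^ 2) (((hg.pow 2).sub ((continuous_const.mul hg))).intervalIntegrable _ _ : IntervalIntegrable (fun x => g x ^ 2 - 2 * c * g x) volume 0 1) (intervalIntegrable_const),
      intervalIntegral.integral_sub (f := fun x => g x ^ 2) (g := fun x => 2 * c * g x) hint2 ((continuous_const.mul hg).intervalIntegrable _ _ : IntervalIntegrable (fun x => 2 * c * g x) volume 0 1),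
      intervalIntegral.integral_const_mul, intervalIntegral.integral_const]
    simp [← hc]
  nlinarith

lemma sub_sq_le_two {a b A B : ℝ} (ha : |a| ≤ A) (hb : |b| ≤ B) :
    (a - b)^2 ≤ 2*A^2 + 2*B^2 := by
  have h1 := abs_le.mp ha
  have h2 := abs_le.mp hb
  have hA : 0 ≤ A := le_trans (abs_nonneg a) ha
  have hB : 0 ≤ B := le_trans (abs_nonneg b) hb
  nlinarith [h1.1, h1.2, h2.1, h2.2, sq_nonneg (a-b), sq_nonneg (A-B), sq_nonneg (a+b)]

lemma pow3_le (j : ℕ) : (3:ℝ)^j ≤ (j ! : ℝ)^2 * (2*j+1) := by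
  induction j with
  | zero => norm_num
  | succ j ih =>
      have hfs : ((j+1)! : ℝ) = (j+1) * (j !) := by
        rw [Nat.factorial_succ]; push_cast; ring
      have hj : (0:ℝ) ≤ (j:ℝ) := Nat.cast_nonneg j
      have hfpos : (0:ℝ) < (j ! : ℝ) := by positivity
      rw [pow_succ, hfs]
      push_cast
      have key : 3*(2*(j:ℝ)+1) ≤ ((j:ℝ)+1)^2*(2*((j:ℝ)+1)+1) := by nlinarith
      have key2 : ((j ! : ℕ) : ℝ)^2 * (3*(2*(j:ℝ)+1)) ≤ ((j ! : ℕ) : ℝ)^2 * (((j:ℝ)+1)^2*(2*((j:ℝ)+1)+1)) :=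
        mul_le_mul_of_nonneg_left key (sq_nonneg _)
      nlinarith [key2]

lemma geom_third (s : ℕ) : (∑ j ∈ range s, ((1:ℝ)/3)^j) ≤ 3/2 := by
  rw [geom_sum_eq (by norm_num : ((1:ℝ)/3) ≠ 1)]
  have h1 : (0:ℝ) ≤ (1/3:ℝ)^s := by positivity
  have h2 : ((1/3:ℝ)^s - 1) / ((1:ℝ)/3 - 1) = (1 - (1/3:ℝ)^s) * (3/2) := by ring
  rw [h2]
  nlinarith

open MeasureTheory Finset intervalIntegral Nat

lemma glue_integral (f P : ℝ → ℝ) (hf : Continuous f) (hP : Continuous P)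
    (ftilde : ℝ → ℝ)
    (hftilde : ∀ x ∈ Set.Icc (0:ℝ) 1,
        ftilde x = if x ≤ 1 / 2 then f (2 * x) + P (2 * x) else f (2 * x - 1)) :
    (∫ x in (0:ℝ)..1, (ftilde x) ^ 2)
      = (1/2) * (∫ y in (0:ℝ)..1, (f y + P y)^2) + (1/2) * (∫ y in (0:ℝ)..1, (f y)^2) := by
  set F : ℝ → ℝ := fun x => if x ≤ 1/2 then f (2*x) + P (2*x) else f (2*x - 1) with hF
  set G1 : ℝ → ℝ := fun y => (f y + P y)^2 with hG1
  set G2 : ℝ → ℝ := fun y => (f y)^2 with hG2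
  have hG1c : Continuous G1 := ((hf.add hP).pow 2)
  have hG2c : Continuous G2 := (hf.pow 2)
  have h1 : (∫ x in (0:ℝ)..1, (ftilde x)^2) = ∫ x in (0:ℝ)..1, (F x)^2 := by
    apply intervalIntegral.integral_congr
    intro x hx
    rw [Set.uIcc_of_le (by norm_num : (0:ℝ) ≤ 1)] at hx
    simp only
    rw [hftilde x hx]
  -- integrability of F^2 on the two halves
  have hInt1 : IntervalIntegrable (fun x => (F x)^2) volume 0 (1/2) := by
    rw [intervalIntegrable_iff_integrableOn_Ioc_of_le (by norm_num)]
    have hcont : Continuous (fun x : ℝ => G1 (2*x)) := hG1c.comp (continuous_const.mul continuous_id)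
    have heq : Set.EqOn (fun x => (F x)^2) (fun x : ℝ => G1 (2*x)) (Set.Ioc (0:ℝ) (1/2)) := by
      intro x hx
      simp only [hF, if_pos hx.2, hG1]
    exact (hcont.integrableOn_Ioc).congr_fun heq.symm measurableSet_Ioc
  have hInt2 : IntervalIntegrable (fun x => (F x)^2) volume (1/2) 1 := by
    rw [intervalIntegrable_iff_integrableOn_Ioc_of_le (by norm_num)]
    have hcont : Continuous (fun x : ℝ => G2 (2*x - 1)) :=
      hG2c.comp ((continuous_const.mul continuous_id).sub continuous_const)
    have heq : Set.EqOn (fun x => (F x)^2) (fun x : ℝ => G2 (2*x - 1)) (Set.Ioc (1/2:ℝ) 1) := by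
      intro x hx
      simp only [hF, if_neg (not_le.mpr hx.1), hG2]
    exact (hcont.integrableOn_Ioc).congr_fun heq.symm measurableSet_Ioc
  have h2 : (∫ x in (0:ℝ)..1, (F x)^2)
      = (∫ x in (0:ℝ)..(1/2), (F x)^2) + ∫ x in (1/2:ℝ)..1, (F x)^2 :=
    (intervalIntegral.integral_add_adjacent_intervals hInt1 hInt2).symm
  have h3 : (∫ x in (0:ℝ)..(1/2), (F x)^2) = ∫ x in (0:ℝ)..(1/2), G1 (2*x) := by
    apply intervalIntegral.integral_congr
    intro x hx
    rw [Set.uIcc_of_le (by norm_num : (0:ℝ) ≤ 1/2)] at hx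
    simp only [hF, if_pos hx.2, hG1]
  have h4 : (∫ x in (1/2:ℝ)..1, (F x)^2) = ∫ x in (1/2:ℝ)..1, G2 (2*x - 1) := by
    apply intervalIntegral.integral_congr_ae
    apply Filter.Eventually.of_forall
    intro x hx
    rw [Set.uIoc_of_le (by norm_num : (1:ℝ)/2 ≤ 1)] at hx
    simp only [hF, if_neg (not_le.mpr hx.1), hG2]
  have h5 : (∫ x in (0:ℝ)..(1/2), G1 (2*x)) = (1/2) * ∫ y in (0:ℝ)..1, G1 y := by
    have := intervalIntegral.integral_comp_mul_left (a := (0:ℝ)) (b := 1/2) G1 (by norm_num : (2:ℝ) ≠ 0)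
    rw [this]
    norm_num
  have h6 : (∫ x in (1/2:ℝ)..1, G2 (2*x - 1)) = (1/2) * ∫ y in (0:ℝ)..1, G2 y := by
    have hc : (∫ x in (1/2:ℝ)..1, (fun y => G2 (y - 1)) (2*x))
        = (2:ℝ)⁻¹ • ∫ y in (2 * (1/2:ℝ))..(2*1), G2 (y - 1) :=
      intervalIntegral.integral_comp_mul_left (fun y => G2 (y - 1)) (by norm_num : (2:ℝ) ≠ 0)
    rw [hc, show (2:ℝ)*(1/2) = 1 by norm_num, show (2:ℝ)*1 = 2 by norm_num,
      intervalIntegral.integral_comp_sub_right (fun y => G2 y) 1]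
    norm_num
  rw [h1, h2, h3, h4, h5, h6]

end Aux

open MeasureTheory Finset

/-- the periodicization `f̃` of `f` (gluing `f + p_f` and `f` on the two
halves of `[0,1]`) has squared `L²(0,1)` norm at most `4` times the squared `H^s(0,1)`
norm of `f`. -/
theorem periodicization_l2_bound (s : ℕ) (hs : 1 ≤ s) (f : ℝ → ℝ)
    (hf : ContDiff ℝ (s : ℕ∞) f)
    (pj qj : ℕ → Polynomial ℝ)
    (hpj : ∀ j < s, IsHermitePoly s j (pj j))
    (hqj : ∀ j < s, IsDualHermitePoly s j (qj j))
    (pf : Polynomial ℝ)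
    (hpf : pf = ∑ j ∈ Finset.range s,
        (iteratedDeriv j f 1 - iteratedDeriv j f 0) • (pj j - qj j))
    (ftilde : ℝ → ℝ)
    (hftilde : ∀ x ∈ Set.Icc (0:ℝ) 1,
        ftilde x = if x ≤ 1 / 2 then f (2 * x) + pf.eval (2 * x) else f (2 * x - 1)) :
    (∫ x in (0:ℝ)..1, (ftilde x) ^ 2) ≤
      4 * ∑ k ∈ Finset.range (s + 1), ∫ x in (0:ℝ)..1, (iteratedDeriv k f x) ^ 2 := by
  have hcontk : ∀ k : ℕ, k ≤ s → Continuous (iteratedDeriv k f) := by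
    intro k hk
    exact hf.continuous_iteratedDeriv k (by exact_mod_cast hk)
  have hfc : Continuous f := by simpa [iteratedDeriv_zero] using hcontk 0 (Nat.zero_le s)
  set P : ℝ → ℝ := fun x => pf.eval x with hP
  have hPc : Continuous P := pf.continuous
  set I : ℕ → ℝ := fun k => ∫ x in (0:ℝ)..1, (iteratedDeriv k f x)^2 with hI
  set c : ℕ → ℝ := fun j => iteratedDeriv j f 1 - iteratedDeriv j f 0 with hc
  -- FTC and Cauchy-Schwarz for the coefficients
  have hcsq : ∀ j, j < s → (c j)^2 ≤ I (j+1) := by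
    intro j hj
    have hdiff : Differentiable ℝ (iteratedDeriv j f) :=
      hf.differentiable_iteratedDeriv j (by exact_mod_cast hj)
    have hftc : (∫ x in (0:ℝ)..1, iteratedDeriv (j+1) f x) = c j := by
      apply intervalIntegral.integral_eq_sub_of_hasDerivAt
      · intro x _
        rw [iteratedDeriv_succ]
        exact (hdiff x).hasDerivAt
      · exact (hcontk (j+1) (by omega)).intervalIntegrable _ _
    calc (c j)^2 = (∫ x in (0:ℝ)..1, iteratedDeriv (j+1) f x)^2 := by rw [hftc]
      _ ≤ ∫ x in (0:ℝ)..1, (iteratedDeriv (j+1) f x)^2 := sq_integral_le (hcontk (j+1) (by omega))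
      _ = I (j+1) := rfl
  set B2 : ℝ := ∑ j ∈ range s, (c j)^2 with hB2
  have hB2nn : 0 ≤ B2 := Finset.sum_nonneg fun j _ => sq_nonneg _
  have hB2le : B2 ≤ ∑ j ∈ range s, I (j+1) :=
    Finset.sum_le_sum fun j hj => hcsq j (Finset.mem_range.mp hj)
  -- pointwise bound for P
  set E : ℕ → ℝ → ℝ := fun j x => 2*((x^j / j !)^2) + 2*(((1-x)^j / j !)^2) with hE
  have hPsq : ∀ x ∈ Set.Icc (0:ℝ) 1, (P x)^2 ≤ B2 * ∑ j ∈ range s, E j x := by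
    intro x hx
    have hPx : P x = ∑ j ∈ range s, c j * ((pj j - qj j).eval x) := by
      rw [hP, hpf]
      simp [Polynomial.eval_finset_sum, Polynomial.eval_smul, smul_eq_mul]
      rfl
    rw [hPx]
    calc (∑ j ∈ range s, c j * ((pj j - qj j).eval x))^2
        ≤ (∑ j ∈ range s, (c j)^2) * ∑ j ∈ range s, ((pj j - qj j).eval x)^2 :=
          Finset.sum_mul_sq_le_sq_mul_sq _ _ _
      _ ≤ B2 * ∑ j ∈ range s, E j x := by
          apply mul_le_mul_of_nonneg_left ?_ hB2nn
          apply Finset.sum_le_sum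
          intro j hj
          have hjs := Finset.mem_range.mp hj
          rw [Polynomial.eval_sub]
          exact sub_sq_le_two (hermite_abs_bound hjs (hpj j hjs) hx.1 hx.2)
            (dual_abs_bound hjs (hqj j hjs) hx.1 hx.2)
  -- integral of E
  have hEc : ∀ j : ℕ, Continuous (E j) := by
    intro j
    rw [hE]
    fun_prop
  have hEint : ∀ j : ℕ, (∫ x in (0:ℝ)..1, E j x) = 4 / ((j ! : ℝ)^2 * (2*j+1)) := by
    intro j
    have e1 : (∫ x in (0:ℝ)..1, 2*((x^j / (j ! : ℝ))^2)) = 2 / ((j ! : ℝ)^2 * (2*j+1)) := by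
      have hrw : ∀ x : ℝ, 2*((x^j / (j ! : ℝ))^2) = (2/((j ! : ℝ)^2)) * x^(2*j) := by
        intro x; rw [div_pow, ← pow_mul]; ring
      simp_rw [hrw]
      rw [intervalIntegral.integral_const_mul, integral_pow]
      have : ((0:ℝ)^(2*j+1)) = 0 := zero_pow (by omega)
      rw [this]
      push_cast
      field_simp
      norm_num
    have e2 : (∫ x in (0:ℝ)..1, 2*(((1-x)^j / (j ! : ℝ))^2)) = 2 / ((j ! : ℝ)^2 * (2*j+1)) := by
      have := intervalIntegral.integral_comp_sub_left (a := (0:ℝ)) (b := 1)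
        (fun y : ℝ => 2*((y^j / (j ! : ℝ))^2)) 1
      rw [this]
      norm_num
      rw [← e1]
      norm_num
    rw [hE]
    simp only
    rw [intervalIntegral.integral_add ((by fun_prop : Continuous fun x:ℝ => 2*((x^j / (j ! : ℝ))^2)).intervalIntegrable _ _)
      ((by fun_prop : Continuous fun x:ℝ => 2*(((1-x)^j / (j ! : ℝ))^2)).intervalIntegrable _ _), e1, e2]
    ring
  have hWle : (∑ j ∈ range s, 4 / ((j ! : ℝ)^2 * (2*j+1))) ≤ 6 := by
    have h1 : ∀ j ∈ range s, 4 / ((j ! : ℝ)^2 * (2*j+1)) ≤ 4 * ((1:ℝ)/3)^j := by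
      intro j _
      have h3 : (0:ℝ) < 3^j := by positivity
      have hD : (0:ℝ) < (j ! : ℝ)^2 * (2*j+1) := by positivity
      rw [show (4:ℝ) * ((1:ℝ)/3)^j = 4 / 3^j by rw [div_pow]; ring]
      gcongr
      exact pow3_le j
    calc (∑ j ∈ range s, 4 / ((j ! : ℝ)^2 * (2*j+1))) ≤ ∑ j ∈ range s, 4 * ((1:ℝ)/3)^j :=
          Finset.sum_le_sum h1
      _ = 4 * ∑ j ∈ range s, ((1:ℝ)/3)^j := by rw [Finset.mul_sum]
      _ ≤ 4 * (3/2) := by nlinarith [geom_third s]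
      _ = 6 := by norm_num
  -- integral bound for P²
  have hPint : (∫ x in (0:ℝ)..1, (P x)^2) ≤ 6 * B2 := by
    have hEsc : Continuous (fun x => B2 * ∑ j ∈ range s, E j x) := by
      apply continuous_const.mul
      exact continuous_finset_sum _ fun j _ => hEc j
    have step1 : (∫ x in (0:ℝ)..1, (P x)^2) ≤ ∫ x in (0:ℝ)..1, B2 * ∑ j ∈ range s, E j x := by
      apply intervalIntegral.integral_mono_on (by norm_num)
        ((hPc.pow 2).intervalIntegrable _ _) (hEsc.intervalIntegrable _ _)
      exact hPsq
    have step2 : (∫ x in (0:ℝ)..1, B2 * ∑ j ∈ range s, E j x)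
        = B2 * ∑ j ∈ range s, (∫ x in (0:ℝ)..1, E j x) := by
      rw [intervalIntegral.integral_const_mul]
      congr 1
      exact intervalIntegral.integral_finset_sum fun j _ => (hEc j).intervalIntegrable _ _
    have step3 : B2 * ∑ j ∈ range s, (∫ x in (0:ℝ)..1, E j x) ≤ B2 * 6 := by
      apply mul_le_mul_of_nonneg_left ?_ hB2nn
      calc (∑ j ∈ range s, ∫ x in (0:ℝ)..1, E j x)
          = ∑ j ∈ range s, 4 / ((j ! : ℝ)^2 * (2*j+1)) := Finset.sum_congr rfl fun j _ => hEint j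
        _ ≤ 6 := hWle
    linarith
  -- the (f+P)² bound
  have hfP : (∫ y in (0:ℝ)..1, (f y + P y)^2) ≤ 4 * I 0 + (4/3) * ∫ x in (0:ℝ)..1, (P x)^2 := by
    have hpt : ∀ y ∈ Set.Icc (0:ℝ) 1, (f y + P y)^2 ≤ 4 * (f y)^2 + (4/3) * (P y)^2 := by
      intro y _
      nlinarith [sq_nonneg (3 * f y - P y)]
    have hmono : (∫ y in (0:ℝ)..1, (f y + P y)^2)
        ≤ ∫ y in (0:ℝ)..1, (4 * (f y)^2 + (4/3) * (P y)^2) := by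
      apply intervalIntegral.integral_mono_on (by norm_num)
        (((hfc.add hPc).pow 2).intervalIntegrable _ _)
        ((by fun_prop : Continuous fun y => 4 * (f y)^2 + (4/3) * (P y)^2).intervalIntegrable _ _)
      exact hpt
    rw [intervalIntegral.integral_add ((by fun_prop : Continuous fun y => 4*(f y)^2).intervalIntegrable _ _)
      ((by fun_prop : Continuous fun y => (4/3)*(P y)^2).intervalIntegrable _ _),
      intervalIntegral.integral_const_mul, intervalIntegral.integral_const_mul] at hmono
    have hI0 : (∫ y in (0:ℝ)..1, (f y)^2) = I 0 := by
      rw [hI]; simp [iteratedDeriv_zero]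
    rw [hI0] at hmono
    exact hmono
  -- glue
  have hglue := glue_integral f P hfc hPc ftilde hftilde
  have hI0nn : 0 ≤ I 0 := intervalIntegral.integral_nonneg (by norm_num) fun x _ => sq_nonneg _
  have hIfy : (∫ y in (0:ℝ)..1, (f y)^2) = I 0 := by
    rw [hI]; simp [iteratedDeriv_zero]
  have hsum : (∑ k ∈ Finset.range (s + 1), I k) = I 0 + ∑ j ∈ range s, I (j+1) := by
    rw [Finset.sum_range_succ']
    ring
  have hfinal : (∫ x in (0:ℝ)..1, (ftilde x) ^ 2) ≤ 4 * ∑ k ∈ Finset.range (s + 1), I k := by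
    rw [hglue, hIfy, hsum]
    have h6 : (∫ x in (0:ℝ)..1, (P x)^2) ≤ 6 * ∑ j ∈ range s, I (j+1) := by nlinarith
    nlinarith [hfP, hPint, hB2le, hI0nn]
  exact hfinal
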